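/- (S-lemma with strict feasibility) Let M, N be symmetric d×d real matrices. Suppose there exists z₀ ∈ ℝᵈ with z₀ᵀNz₀ > 0. Then (zᵀNz ≥ 0 implies zᵀMz ≤ 0, for all z ∈ ℝᵈ) if and only if there exists λ ≥ 0 such that M + λN ⪯ 0. -/

import Mathlib

open Matrix

namespace SLemmaAux

variable {d : ℕ}

/-- The quadratic form associated to a matrix. -/
def quad (A : Matrix (Fin d) (Fin d) ℝ) (z : Fin d → ℝ) : ℝ := z ⬝ᵥ A.mulVec z

lemma dot_symm {A : Matrix (Fin d) (Fin d) ℝ} (hA : Aᵀ = A) (x y : Fin d → ℝ) :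
    x ⬝ᵥ A.mulVec y = (A.mulVec x) ⬝ᵥ y := by
  rw [dotProduct_mulVec, ← mulVec_transpose, hA]

lemma quad_smul (A : Matrix (Fin d) (Fin d) ℝ) (c : ℝ) (z : Fin d → ℝ) :
    quad A (c • z) = c ^ 2 * quad A z := by
  simp only [quad, mulVec_smul, smul_dotProduct, dotProduct_smul, smul_eq_mul]
  ring

lemma quad_split (M N : Matrix (Fin d) (Fin d) ℝ) (l : ℝ) (z : Fin d → ℝ) :
    quad (M + l • N) z = quad M z + l * quad N z := by
  simp only [quad, add_mulVec, smul_mulVec, dotProduct_add, dotProduct_smul, smul_eq_mul]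

lemma continuous_quad (A : Matrix (Fin d) (Fin d) ℝ) : Continuous (quad A) := by
  have h : quad A = fun z : Fin d → ℝ => ∑ i, z i * ∑ j, A i j * z j := by
    funext z
    simp [quad, Matrix.mulVec, dotProduct]
  rw [h]
  exact continuous_finset_sum _ fun i _ =>
    (continuous_apply i).mul (continuous_finset_sum _ fun j _ =>
      continuous_const.mul (continuous_apply j))

lemma dotProduct_self_nonneg' (z : Fin d → ℝ) : 0 ≤ z ⬝ᵥ z :=
  Finset.sum_nonneg fun i _ => mul_self_nonneg (z i)

lemma dotProduct_self_pos {z : Fin d → ℝ} (hz : z ≠ 0) : 0 < z ⬝ᵥ z := by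
  rcases lt_or_eq_of_le (dotProduct_self_nonneg' z) with h | h
  · exact h
  · exact absurd (dotProduct_self_eq_zero.mp h.symm) hz

/-- normalize a nonzero vector to the unit sphere -/
lemma exists_normalize {z : Fin d → ℝ} (hz : z ≠ 0) :
    ∃ c : ℝ, 0 < c ∧ (c • z) ⬝ᵥ (c • z) = 1 := by
  have hpos : 0 < z ⬝ᵥ z := dotProduct_self_pos hz
  refine ⟨(Real.sqrt (z ⬝ᵥ z))⁻¹, inv_pos.mpr (Real.sqrt_pos.mpr hpos), ?_⟩
  rw [smul_dotProduct, dotProduct_smul, smul_eq_mul, smul_eq_mul, ← mul_assoc,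
    ← one_div, div_mul_div_comm, one_mul, Real.mul_self_sqrt hpos.le]
  field_simp

/-- The unit sphere (w.r.t. the dot product) is compact. -/
lemma sphere_compact : IsCompact {z : Fin d → ℝ | z ⬝ᵥ z = 1} := by
  have hcont : Continuous fun z : Fin d → ℝ => z ⬝ᵥ z := by
    have heq : (fun z : Fin d → ℝ => z ⬝ᵥ z) = quad (1 : Matrix (Fin d) (Fin d) ℝ) := by
      funext z; simp [quad, one_mulVec]
    rw [heq]; exact continuous_quad 1
  have hclosed : IsClosed {z : Fin d → ℝ | z ⬝ᵥ z = 1} :=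
    isClosed_eq hcont continuous_const
  refine (isCompact_closedBall (0 : Fin d → ℝ) 1).of_isClosed_subset hclosed ?_
  intro z hz
  simp only [Metric.mem_closedBall, dist_zero_right]
  rw [pi_norm_le_iff_of_nonneg (by norm_num : (0:ℝ) ≤ 1)]
  intro i
  rw [Real.norm_eq_abs, abs_le_one_iff_mul_self_le_one]
  calc z i * z i ≤ ∑ j, z j * z j :=
        Finset.single_le_sum (fun j _ => mul_self_nonneg (z j)) (Finset.mem_univ i)
    _ = 1 := hz

/-- A maximizer of a symmetric quadratic form on the unit sphere is an eigenvector. -/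
lemma maximizer_is_eigenvector {A : Matrix (Fin d) (Fin d) ℝ} (hA : Aᵀ = A)
    {z : Fin d → ℝ} (hz : z ⬝ᵥ z = 1)
    (hmax : ∀ w : Fin d → ℝ, w ⬝ᵥ w = 1 → quad A w ≤ quad A z) :
    A.mulVec z = (quad A z) • z := by
  set μ := quad A z with hμ
  -- homogeneous form of maximality
  have hhom : ∀ y : Fin d → ℝ, quad A y ≤ μ * (y ⬝ᵥ y) := by
    intro y
    by_cases hy : y = 0
    · subst hy
      simp [quad]
    · obtain ⟨c, hc, hcy⟩ := exists_normalize hy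
      have := hmax (c • y) hcy
      rw [quad_smul] at this
      have hdot : (c • y) ⬝ᵥ (c • y) = c ^ 2 * (y ⬝ᵥ y) := by
        rw [smul_dotProduct, dotProduct_smul, smul_eq_mul, smul_eq_mul]; ring
      rw [hdot] at hcy
      have hyy : 0 ≤ y ⬝ᵥ y := dotProduct_self_nonneg' y
      have h2 : c ^ 2 * quad A y * (y ⬝ᵥ y) ≤ μ * (y ⬝ᵥ y) :=
        mul_le_mul_of_nonneg_right this hyy
      calc quad A y = quad A y * (c ^ 2 * (y ⬝ᵥ y)) := by rw [hcy, mul_one]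
        _ = c ^ 2 * quad A y * (y ⬝ᵥ y) := by ring
        _ ≤ μ * (y ⬝ᵥ y) := h2
  -- it suffices to show the defect vector is orthogonal to everything
  have key : ∀ y : Fin d → ℝ, (A.mulVec z - μ • z) ⬝ᵥ y = 0 := by
    intro y
    set c := (A.mulVec z - μ • z) ⬝ᵥ y with hc
    set K := μ * (y ⬝ᵥ y) - quad A y with hK
    have hKnn : 0 ≤ K := by have := hhom y; simp [hK]; linarith
    have hineq : ∀ ε : ℝ, 2 * ε * c ≤ ε ^ 2 * K := by
      intro ε
      have h1 := hhom (z + ε • y)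
      have expand1 : quad A (z + ε • y)
          = quad A z + 2 * ε * ((A.mulVec z) ⬝ᵥ y) + ε ^ 2 * quad A y := by
        simp only [quad, mulVec_add, mulVec_smul, dotProduct_add, add_dotProduct,
          dotProduct_smul, smul_dotProduct, smul_eq_mul]
        have hsym : y ⬝ᵥ A.mulVec z = (A.mulVec z) ⬝ᵥ y := dotProduct_comm _ _
        have hsym2 : z ⬝ᵥ A.mulVec y = (A.mulVec z) ⬝ᵥ y := dot_symm hA z y
        rw [hsym, hsym2]
        ring
      have expand2 : (z + ε • y) ⬝ᵥ (z + ε • y)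
          = 1 + 2 * ε * (z ⬝ᵥ y) + ε ^ 2 * (y ⬝ᵥ y) := by
        simp only [dotProduct_add, add_dotProduct, dotProduct_smul, smul_dotProduct,
          smul_eq_mul]
        rw [hz]
        have : y ⬝ᵥ z = z ⬝ᵥ y := dotProduct_comm _ _
        rw [this]
        ring
      rw [expand1, expand2] at h1
      have hcval : c = (A.mulVec z) ⬝ᵥ y - μ * (z ⬝ᵥ y) := by
        rw [hc, sub_dotProduct, smul_dotProduct, smul_eq_mul]
      rw [hcval, hK]
      nlinarith [h1]
    -- conclude c = 0
    by_contra hcne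
    have h2 := hineq (c / (K + 1))
    have hK1 : 0 < K + 1 := by linarith
    have hne : K + 1 ≠ 0 := ne_of_gt hK1
    set ε := c / (K + 1) with hεdef
    have hεK : ε * (K + 1) = c := div_mul_cancel₀ c hne
    have hε : ε ≠ 0 := fun h => hcne (by rw [← hεK, h, zero_mul])
    have hε2 : 0 < ε ^ 2 := by positivity
    have h4 : 2 * ε * c = 2 * ε ^ 2 * (K + 1) := by rw [← hεK]; ring
    have h5 := hineq ε
    nlinarith [mul_nonneg hε2.le hKnn]
  have hzero : A.mulVec z - μ • z = 0 := by
    have := key (A.mulVec z - μ • z)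
    exact dotProduct_self_eq_zero.mp this
  linear_combination (norm := module) hzero

/-- Extract a cluster point from a sequence on a compact set with asymptotic bounds. -/
lemma cluster_aux {S : Set (Fin d → ℝ)} (hS : IsCompact S)
    (f g : (Fin d → ℝ) → ℝ) (hf : Continuous f) (hg : Continuous g)
    (z : ℕ → Fin d → ℝ) (hzS : ∀ k, z k ∈ S) (a c : ℝ) (hc : 0 ≤ c)
    (hfz : ∀ k : ℕ, a - c / (k + 1) ≤ f (z k)) (hgz : ∀ k, 0 ≤ g (z k)) :
    ∃ w ∈ S, a ≤ f w ∧ 0 ≤ g w := by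
  obtain ⟨w, hwS, φ, hφ, hconv⟩ := hS.tendsto_subseq hzS
  refine ⟨w, hwS, ?_, ?_⟩
  · have h1 : Filter.Tendsto (fun k => f (z (φ k))) Filter.atTop (nhds (f w)) :=
      (hf.tendsto w).comp hconv
    have h2 : Filter.Tendsto (fun k : ℕ => a - c / (k + 1)) Filter.atTop (nhds a) := by
      have : Filter.Tendsto (fun k : ℕ => c / (k + 1)) Filter.atTop (nhds 0) := by
        apply Filter.Tendsto.const_div_atTop
        exact Filter.tendsto_atTop_add_const_right _ 1 tendsto_natCast_atTop_atTop
      simpa using Filter.Tendsto.const_sub a this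
    refine le_of_tendsto_of_tendsto h2 h1 ?_
    filter_upwards with k
    calc a - c / (k + 1) ≤ a - c / (φ k + 1) := by
          have hφk : (k : ℝ) ≤ (φ k : ℝ) := Nat.cast_le.mpr (hφ.id_le k)
          have h1 : (0:ℝ) < (k:ℝ) + 1 := by positivity
          have h2 : (0:ℝ) < (φ k : ℝ) + 1 := by positivity
          have : c / ((φ k : ℝ) + 1) ≤ c / ((k : ℝ) + 1) :=
            div_le_div_of_nonneg_left hc h1 (by linarith) |>.trans_eq rfl
          linarith
      _ ≤ f (z (φ k)) := hfz (φ k)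
  · have h1 : Filter.Tendsto (fun k => g (z (φ k))) Filter.atTop (nhds (g w)) :=
      (hg.tendsto w).comp hconv
    exact ge_of_tendsto' h1 fun k => hgz (φ k)

end SLemmaAux

open SLemmaAux in
/-- Hard direction of the S-lemma. -/
theorem slemma_hard {d : ℕ} (M N : Matrix (Fin d) (Fin d) ℝ) (hM : Mᵀ = M) (hN : Nᵀ = N)
    (hd : 0 < d) (z₀ : Fin d → ℝ) (h0 : 0 < quad N z₀)
    (hyp : ∀ z : Fin d → ℝ, 0 ≤ quad N z → quad M z ≤ 0) :
    ∃ l : ℝ, 0 ≤ l ∧ ∀ z : Fin d → ℝ, quad (M + l • N) z ≤ 0 := by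
  by_contra hcon
  push_neg at hcon
  -- hcon : ∀ l, 0 ≤ l → ∃ z, 0 < quad (M + l • N) z
  obtain ⟨S, hSdef⟩ : ∃ S : Set (Fin d → ℝ), S = {z | z ⬝ᵥ z = 1} := ⟨_, rfl⟩
  have hScpt : IsCompact S := hSdef ▸ sphere_compact
  have hSne : S.Nonempty := by
    refine ⟨Pi.single ⟨0, hd⟩ 1, ?_⟩
    rw [hSdef]
    simp [dotProduct, Pi.single_apply]
  have hSmem : ∀ z : Fin d → ℝ, z ∈ S ↔ z ⬝ᵥ z = 1 := fun z => by rw [hSdef]; rfl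
  obtain ⟨f, hfdef⟩ : ∃ f : ℝ → (Fin d → ℝ) → ℝ,
      f = fun l z => quad M z + l * quad N z := ⟨_, rfl⟩
  have hfval : ∀ l z, f l z = quad M z + l * quad N z := fun l z => by rw [hfdef]
  have contf : ∀ l : ℝ, Continuous (f l) := by
    intro l
    rw [hfdef]
    exact (continuous_quad M).add (continuous_const.mul (continuous_quad N))
  have key : ∀ l : ℝ, ∃ z ∈ S, ∀ w ∈ S, f l w ≤ f l z := by
    intro l
    obtain ⟨z, hzS, hzmax⟩ := hScpt.exists_isMaxOn hSne ((contf l).continuousOn)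
    exact ⟨z, hzS, fun w hw => hzmax hw⟩
  choose zm hzmS hzmax using key
  obtain ⟨h, hhval⟩ : ∃ h : ℝ → ℝ, ∀ l, h l = f l (zm l) := ⟨_, fun l => rfl⟩
  have hub : ∀ (l : ℝ) (z : Fin d → ℝ), z ∈ S → f l z ≤ h l := by
    intro l z hz; rw [hhval]; exact hzmax l z hz
  -- bound on |quad N| over the sphere
  obtain ⟨C, hCdef⟩ : ∃ C : ℝ, C = ∑ i, ∑ j, |N i j| := ⟨_, rfl⟩
  have hCnn : 0 ≤ C := by
    rw [hCdef]
    exact Finset.sum_nonneg fun i _ => Finset.sum_nonneg fun j _ => abs_nonneg _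
  have hC : ∀ z ∈ S, |quad N z| ≤ C := by
    intro z hz
    rw [hSmem] at hz
    rw [hCdef]
    have habs : ∀ i, |z i| ≤ 1 := by
      intro i
      rw [abs_le_one_iff_mul_self_le_one]
      calc z i * z i ≤ ∑ j, z j * z j :=
            Finset.single_le_sum (fun j _ => mul_self_nonneg (z j)) (Finset.mem_univ i)
        _ = 1 := hz
    have h1 : quad N z = ∑ i, ∑ j, z i * (N i j * z j) := by
      simp [quad, Matrix.mulVec, dotProduct, Finset.mul_sum]
    rw [h1]
    calc |∑ i, ∑ j, z i * (N i j * z j)| ≤ ∑ i, |∑ j, z i * (N i j * z j)| :=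
          Finset.abs_sum_le_sum_abs _ _
      _ ≤ ∑ i, ∑ j, |z i * (N i j * z j)| :=
          Finset.sum_le_sum fun i _ => Finset.abs_sum_le_sum_abs _ _
      _ ≤ ∑ i, ∑ j, |N i j| := by
          refine Finset.sum_le_sum fun i _ => Finset.sum_le_sum fun j _ => ?_
          rw [abs_mul, abs_mul]
          have h2 := habs i
          have h3 := habs j
          have h4 : |z i| * (|N i j| * |z j|) ≤ 1 * (|N i j| * 1) := by
            apply mul_le_mul h2 ?_ (by positivity) (by norm_num)
            exact mul_le_mul_of_nonneg_left h3 (abs_nonneg _)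
          calc |z i| * (|N i j| * |z j|) ≤ 1 * (|N i j| * 1) := h4
            _ = |N i j| := by ring
  have hCub : ∀ z ∈ S, quad N z ≤ C := fun z hz => (abs_le.mp (hC z hz)).2
  have hClb : ∀ z ∈ S, -C ≤ quad N z := fun z hz => (abs_le.mp (hC z hz)).1
  -- h is Lipschitz, hence continuous
  have hLip : ∀ l l' : ℝ, h l ≤ h l' + C * |l - l'| := by
    intro l l'
    have h1 : f l (zm l) = f l' (zm l) + (l - l') * quad N (zm l) := by
      rw [hfval, hfval]; ring
    have h2 : (l - l') * quad N (zm l) ≤ |l - l'| * C := by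
      calc (l - l') * quad N (zm l) ≤ |(l - l') * quad N (zm l)| := le_abs_self _
        _ = |l - l'| * |quad N (zm l)| := abs_mul _ _
        _ ≤ |l - l'| * C := mul_le_mul_of_nonneg_left (hC _ (hzmS l)) (abs_nonneg _)
    calc h l = f l (zm l) := hhval l
      _ = f l' (zm l) + (l - l') * quad N (zm l) := h1
      _ ≤ h l' + |l - l'| * C := add_le_add (hub l' _ (hzmS l)) h2
      _ = h l' + C * |l - l'| := by ring
  have hcont : Continuous h := by
    refine LipschitzWith.continuous (K := Real.toNNReal C) ?_
    apply LipschitzWith.of_dist_le_mul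
    intro x y
    rw [Real.dist_eq, Real.dist_eq, Real.coe_toNNReal C hCnn]
    rw [abs_sub_le_iff]
    constructor
    · have := hLip x y; linarith
    · have := hLip y x; rw [abs_sub_comm]; linarith
  -- h is positive on [0, ∞)
  have hpos : ∀ l : ℝ, 0 ≤ l → 0 < h l := by
    intro l hl
    obtain ⟨z, hz⟩ := hcon l hl
    rw [quad_split] at hz
    have hzne : z ≠ 0 := by
      intro h0'
      rw [h0'] at hz
      simp [quad] at hz
    obtain ⟨c, hcpos, hcz⟩ := exists_normalize hzne
    have hmem : c • z ∈ S := (hSmem _).mpr hcz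
    have heq : f l (c • z) = c ^ 2 * (quad M z + l * quad N z) := by
      rw [hfval, quad_smul, quad_smul]; ring
    have h2 : 0 < f l (c • z) := by
      rw [heq]
      exact mul_pos (pow_pos hcpos 2) hz
    exact lt_of_lt_of_le h2 (hub l _ hmem)
  -- normalized strictly feasible point
  have hz₀ne : z₀ ≠ 0 := by
    intro h0'
    rw [h0'] at h0
    simp [quad] at h0
  obtain ⟨c₀, hc₀pos, hc₀z⟩ := exists_normalize hz₀ne
  obtain ⟨w₀, hw₀def⟩ : ∃ w₀ : Fin d → ℝ, w₀ = c₀ • z₀ := ⟨_, rfl⟩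
  have hw₀S : w₀ ∈ S := (hSmem _).mpr (by rw [hw₀def]; exact hc₀z)
  have hw₀N : 0 < quad N w₀ := by
    rw [hw₀def, quad_smul]
    exact mul_pos (pow_pos hc₀pos 2) h0
  -- threshold
  obtain ⟨Λ, hΛdef⟩ : ∃ Λ : ℝ, Λ = max 0 ((h 0 - quad M w₀) / quad N w₀) := ⟨_, rfl⟩
  have hΛ0 : 0 ≤ Λ := by rw [hΛdef]; exact le_max_left _ _
  have hge : ∀ l : ℝ, Λ ≤ l → h 0 ≤ h l := by
    intro l hl
    rw [hΛdef] at hl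
    have h1 : (h 0 - quad M w₀) / quad N w₀ ≤ l := le_trans (le_max_right _ _) hl
    have h2 : h 0 - quad M w₀ ≤ l * quad N w₀ := by
      rw [div_le_iff₀ hw₀N] at h1
      linarith
    calc h 0 ≤ quad M w₀ + l * quad N w₀ := by linarith
      _ = f l w₀ := (hfval l w₀).symm
      _ ≤ h l := hub l _ hw₀S
  -- minimizer of h on [0, Λ]
  obtain ⟨lstar, hlstarIcc, hlmin⟩ :=
    (isCompact_Icc : IsCompact (Set.Icc (0:ℝ) Λ)).exists_isMinOn
      ⟨0, Set.mem_Icc.mpr ⟨le_refl 0, hΛ0⟩⟩ hcont.continuousOn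
  have hlstar0 : 0 ≤ lstar := hlstarIcc.1
  have hglobal : ∀ l : ℝ, 0 ≤ l → h lstar ≤ h l := by
    intro l hl
    by_cases hlΛ : l ≤ Λ
    · exact hlmin (Set.mem_Icc.mpr ⟨hl, hlΛ⟩)
    · have h1 : h lstar ≤ h 0 := hlmin (Set.mem_Icc.mpr ⟨le_refl 0, hΛ0⟩)
      exact le_trans h1 (hge l (le_of_not_ge hlΛ))
  have hμpos : 0 < h lstar := hpos lstar hlstar0
  -- existence of maximizer with nonnegative N-form via cluster point
  have hzp : ∃ zp ∈ S, h lstar ≤ f lstar zp ∧ 0 ≤ quad N zp := by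
    have hstep : ∀ k : ℕ, h lstar - C / ((k:ℝ) + 1) ≤ f lstar (zm (lstar + 1/((k:ℝ)+1)))
        ∧ 0 ≤ quad N (zm (lstar + 1/((k:ℝ)+1))) := by
      intro k
      have hε : (0:ℝ) < 1 / ((k:ℝ) + 1) := by positivity
      have hl : (0:ℝ) ≤ lstar + 1/((k:ℝ)+1) := by linarith
      have h1 : h lstar ≤ h (lstar + 1/((k:ℝ)+1)) := hglobal _ hl
      have h2 : h (lstar + 1/((k:ℝ)+1)) = f lstar (zm (lstar + 1/((k:ℝ)+1)))
          + (1/((k:ℝ)+1)) * quad N (zm (lstar + 1/((k:ℝ)+1))) := by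
        rw [hhval, hfval, hfval]; ring
      have h3 : f lstar (zm (lstar + 1/((k:ℝ)+1))) ≤ h lstar := hub lstar _ (hzmS _)
      have h4 : 0 ≤ quad N (zm (lstar + 1/((k:ℝ)+1))) := by
        by_contra h5
        push_neg at h5
        nlinarith
      refine ⟨?_, h4⟩
      have h6 : quad N (zm (lstar + 1/((k:ℝ)+1))) ≤ C := hCub _ (hzmS _)
      have h7 : (1/((k:ℝ)+1)) * quad N (zm (lstar + 1/((k:ℝ)+1)))
          ≤ (1/((k:ℝ)+1)) * C := mul_le_mul_of_nonneg_left h6 hε.le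
      have h8 : (1/((k:ℝ)+1)) * C = C / ((k:ℝ) + 1) := by ring
      linarith
    exact cluster_aux hScpt (f lstar) (quad N) (contf lstar) (continuous_quad N)
      (fun k => zm (lstar + 1/((k:ℝ)+1))) (fun k => hzmS _) (h lstar) C hCnn
      (fun k => (hstep k).1) (fun k => (hstep k).2)
  obtain ⟨zp, hzpS, hzpf, hzpN⟩ := hzp
  have hfp : f lstar zp = h lstar := le_antisymm (hub lstar _ hzpS) hzpf
  have hMzp : quad M zp = h lstar - lstar * quad N zp := by
    have h1 := hfp
    rw [hfval] at h1
    linarith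
  by_cases hprod : lstar * quad N zp = 0
  · -- direct contradiction
    have h1 : quad M zp = h lstar := by rw [hMzp, hprod, sub_zero]
    have h2 : quad M zp ≤ 0 := hyp zp hzpN
    linarith
  · have hlstarpos : 0 < lstar := by
      rcases hlstar0.lt_or_eq with h' | h'
      · exact h'
      · exact absurd (by rw [← h', zero_mul]) hprod
    have hzpNpos : 0 < quad N zp := by
      rcases hzpN.lt_or_eq with h' | h'
      · exact h'
      · exact absurd (by rw [← h', mul_zero]) hprod
    -- maximizer with nonpositive N-form
    have hzn : ∃ zn ∈ S, h lstar ≤ f lstar zn ∧ 0 ≤ -quad N zn := by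
      have hstep : ∀ k : ℕ, h lstar - lstar * C / ((k:ℝ) + 1)
          ≤ f lstar (zm (lstar - lstar/((k:ℝ)+1)))
          ∧ 0 ≤ -quad N (zm (lstar - lstar/((k:ℝ)+1))) := by
        intro k
        have hk1 : (1:ℝ) ≤ (k:ℝ) + 1 := by
          have : (0:ℝ) ≤ (k:ℝ) := Nat.cast_nonneg k
          linarith
        have hε : (0:ℝ) < lstar / ((k:ℝ) + 1) := by positivity
        have hεle : lstar / ((k:ℝ)+1) ≤ lstar := div_le_self hlstar0 hk1
        have hl : (0:ℝ) ≤ lstar - lstar/((k:ℝ)+1) := by linarith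
        have h1 : h lstar ≤ h (lstar - lstar/((k:ℝ)+1)) := hglobal _ hl
        have h2 : h (lstar - lstar/((k:ℝ)+1)) = f lstar (zm (lstar - lstar/((k:ℝ)+1)))
            - (lstar/((k:ℝ)+1)) * quad N (zm (lstar - lstar/((k:ℝ)+1))) := by
          rw [hhval, hfval, hfval]; ring
        have h3 : f lstar (zm (lstar - lstar/((k:ℝ)+1))) ≤ h lstar := hub lstar _ (hzmS _)
        have h4 : quad N (zm (lstar - lstar/((k:ℝ)+1))) ≤ 0 := by
          by_contra h5
          push_neg at h5
          nlinarith
        refine ⟨?_, by linarith⟩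
        have h6 : -C ≤ quad N (zm (lstar - lstar/((k:ℝ)+1))) := hClb _ (hzmS _)
        have h7 : -((lstar/((k:ℝ)+1)) * C) ≤ (lstar/((k:ℝ)+1)) * quad N (zm (lstar - lstar/((k:ℝ)+1))) := by
          nlinarith
        have h8 : (lstar/((k:ℝ)+1)) * C = lstar * C / ((k:ℝ) + 1) := by ring
        linarith
      exact cluster_aux hScpt (f lstar) (fun z => -quad N z) (contf lstar)
        (continuous_quad N).neg (fun k => zm (lstar - lstar/((k:ℝ)+1))) (fun k => hzmS _)
        (h lstar) (lstar * C) (mul_nonneg hlstar0 hCnn)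
        (fun k => (hstep k).1) (fun k => (hstep k).2)
    obtain ⟨zn, hznS, hznf, hznN'⟩ := hzn
    have hznN : quad N zn ≤ 0 := by linarith
    have hfn : f lstar zn = h lstar := le_antisymm (hub lstar _ hznS) hznf
    have hznNneg : quad N zn < 0 := by
      rcases hznN.lt_or_eq with h' | h'
      · exact h'
      · exfalso
        have h1 : quad M zn = h lstar := by
          rw [hfval] at hfn
          rw [h'] at hfn
          linarith
        have h2 : quad M zn ≤ 0 := hyp zn (le_of_eq h'.symm)
        linarith
    -- eigenvector argument
    have hAT : (M + lstar • N)ᵀ = M + lstar • N := by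
      rw [transpose_add, transpose_smul, hM, hN]
    have hfA : ∀ z, quad (M + lstar • N) z = f lstar z := by
      intro z; rw [quad_split, hfval]
    have hmaxA : ∀ w : Fin d → ℝ, w ⬝ᵥ w = 1 →
        quad (M + lstar • N) w ≤ quad (M + lstar • N) zp := by
      intro w hw
      rw [hfA, hfA, hfp]
      exact hub lstar w ((hSmem w).mpr hw)
    have hQAzp : quad (M + lstar • N) zp = h lstar := by rw [hfA, hfp]
    have hQAzn : quad (M + lstar • N) zn = h lstar := by rw [hfA, hfn]
    have hzpS' : zp ⬝ᵥ zp = 1 := (hSmem zp).mp hzpS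
    have hznS' : zn ⬝ᵥ zn = 1 := (hSmem zn).mp hznS
    have heigp : (M + lstar • N).mulVec zp = (h lstar) • zp := by
      have := maximizer_is_eigenvector hAT hzpS' hmaxA
      rwa [hQAzp] at this
    have hmaxA' : ∀ w : Fin d → ℝ, w ⬝ᵥ w = 1 →
        quad (M + lstar • N) w ≤ quad (M + lstar • N) zn := by
      intro w hw
      rw [hfA, hQAzn]
      exact hub lstar w ((hSmem w).mpr hw)
    have heign : (M + lstar • N).mulVec zn = (h lstar) • zn := by
      have := maximizer_is_eigenvector hAT hznS' hmaxA'
      rwa [hQAzn] at this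
    -- intermediate value: find v on segment with quad N v = 0
    have hgcont : Continuous (fun θ : ℝ => quad N ((1 - θ) • zp + θ • zn)) := by
      apply (continuous_quad N).comp
      exact ((continuous_const.sub continuous_id).smul continuous_const).add
        (continuous_id.smul continuous_const)
    have hmem : (0:ℝ) ∈ Set.Icc (quad N ((1 - (1:ℝ)) • zp + (1:ℝ) • zn))
        (quad N ((1 - (0:ℝ)) • zp + (0:ℝ) • zn)) := by
      norm_num
      exact ⟨hznNneg.le, hzpNpos.le⟩
    obtain ⟨θ, hθIcc, hθ⟩ := intermediate_value_Icc' (by norm_num : (0:ℝ) ≤ 1)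
      hgcont.continuousOn hmem
    have hvN : quad N ((1 - θ) • zp + θ • zn) = 0 := hθ
    have hvne : (1 - θ) • zp + θ • zn ≠ 0 := by
      intro hv0
      have hsplit : (1 - θ) • zp = (-θ) • zn := by
        rw [add_eq_zero_iff_eq_neg] at hv0
        rw [hv0, neg_smul]
      have heq : (1 - θ) ^ 2 * quad N zp = θ ^ 2 * quad N zn := by
        calc (1 - θ) ^ 2 * quad N zp = quad N ((1 - θ) • zp) := (quad_smul _ _ _).symm
          _ = quad N ((-θ) • zn) := by rw [hsplit]
          _ = (-θ) ^ 2 * quad N zn := quad_smul _ _ _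
          _ = θ ^ 2 * quad N zn := by ring_nf
      have h1 : (1 - θ) ^ 2 * quad N zp = 0 :=
        le_antisymm (heq ▸ mul_nonpos_of_nonneg_of_nonpos (sq_nonneg θ) hznNneg.le)
          (mul_nonneg (sq_nonneg _) hzpNpos.le)
      have h2 : (1 - θ) ^ 2 = 0 := by
        rcases mul_eq_zero.mp h1 with h' | h'
        · exact h'
        · exact absurd h' (ne_of_gt hzpNpos)
      have h3 : θ = 1 := by
        have h4 : 1 - θ = 0 := pow_eq_zero_iff (two_ne_zero) |>.mp h2
        linarith
      rw [h3] at heq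
      norm_num at heq
      linarith
    have hvA : (M + lstar • N).mulVec ((1 - θ) • zp + θ • zn)
        = (h lstar) • ((1 - θ) • zp + θ • zn) := by
      rw [mulVec_add, mulVec_smul, mulVec_smul, heigp, heign]
      module
    have hvQA : quad (M + lstar • N) ((1 - θ) • zp + θ • zn)
        = (h lstar) * (((1 - θ) • zp + θ • zn) ⬝ᵥ ((1 - θ) • zp + θ • zn)) := by
      rw [quad, hvA, dotProduct_smul, smul_eq_mul]
    have hvv : 0 < ((1 - θ) • zp + θ • zn) ⬝ᵥ ((1 - θ) • zp + θ • zn) :=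
      dotProduct_self_pos hvne
    have hvM : quad M ((1 - θ) • zp + θ • zn)
        = (h lstar) * (((1 - θ) • zp + θ • zn) ⬝ᵥ ((1 - θ) • zp + θ • zn)) := by
      have h1 : quad (M + lstar • N) ((1 - θ) • zp + θ • zn)
          = quad M ((1 - θ) • zp + θ • zn) + lstar * quad N ((1 - θ) • zp + θ • zn) :=
        quad_split M N lstar _
      rw [hvN, mul_zero, add_zero] at h1
      rw [← h1, hvQA]
    have hfinal : quad M ((1 - θ) • zp + θ • zn) ≤ 0 := hyp _ (le_of_eq hvN.symm)
    have hmul : 0 < h lstar * (((1 - θ) • zp + θ • zn) ⬝ᵥ ((1 - θ) • zp + θ • zn)) :=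
      mul_pos hμpos hvv
    linarith

open SLemmaAux

theorem stmt10 {d : ℕ} (M N : Matrix (Fin d) (Fin d) ℝ) (hM : M.IsSymm) (hN : N.IsSymm)
    (h0 : ∃ z₀ : Fin d → ℝ, 0 < z₀ ⬝ᵥ N.mulVec z₀) :
    (∀ z : Fin d → ℝ, 0 ≤ z ⬝ᵥ N.mulVec z → z ⬝ᵥ M.mulVec z ≤ 0) ↔
      ∃ l : ℝ, 0 ≤ l ∧ (-(M + l • N)).PosSemidef := by
  rcases Nat.eq_zero_or_pos d with hd0 | hd
  · subst hd0
    obtain ⟨z₀, hz₀⟩ := h0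
    have : z₀ ⬝ᵥ N.mulVec z₀ = 0 := by simp [dotProduct]
    rw [this] at hz₀
    exact absurd hz₀ (lt_irrefl 0)
  · have hMT : Mᵀ = M := hM
    have hNT : Nᵀ = N := hN
    constructor
    · intro hypo
      obtain ⟨z₀, hz₀⟩ := h0
      have hz₀' : 0 < quad N z₀ := hz₀
      have hypo' : ∀ z : Fin d → ℝ, 0 ≤ quad N z → quad M z ≤ 0 := fun z hz => hypo z hz
      obtain ⟨l, hl0, hl⟩ := slemma_hard M N hMT hNT hd z₀ hz₀' hypo'
      refine ⟨l, hl0, posSemidef_iff_dotProduct_mulVec.mpr ⟨?_, ?_⟩⟩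
      · show (-(M + l • N))ᴴ = -(M + l • N)
        rw [conjTranspose_eq_transpose_of_trivial, transpose_neg, transpose_add,
          transpose_smul, hMT, hNT]
      · intro x
        have h1 : quad (M + l • N) x ≤ 0 := hl x
        have h2 : x ⬝ᵥ (M + l • N).mulVec x ≤ 0 := h1
        have h3 : star x = x := by
          funext i
          simp
        rw [h3, neg_mulVec, dotProduct_neg]
        linarith
    · rintro ⟨l, hl0, hpsd'⟩
      obtain ⟨hherm, hpsd⟩ := posSemidef_iff_dotProduct_mulVec.mp hpsd'
      intro z hz
      have h1 := hpsd z
      have h3 : star z = z := by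
        funext i
        simp
      rw [h3, neg_mulVec, dotProduct_neg] at h1
      have h2 : z ⬝ᵥ (M + l • N).mulVec z ≤ 0 := by linarith
      have h4 : quad M z + l * quad N z ≤ 0 := by
        calc quad M z + l * quad N z = quad (M + l • N) z := (quad_split M N l z).symm
          _ ≤ 0 := h2
      have h5 : 0 ≤ quad N z := hz
      have h6 : 0 ≤ l * quad N z := mul_nonneg hl0 h5
      show quad M z ≤ 0
      linarith
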